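/- Let A be a unital Banach algebra with multiplication map π : A ⊗̂ A^{op} → A, let δ ∈ (ker π)**, and let R = Σᵢ aᵢ ⊗ bᵢ ∈ ker π be a finite sum of elementary tensors. Then R ⋆ δ - R = Σᵢ (aᵢ·δ - δ·aᵢ - aᵢ ⊗ 1 + 1 ⊗ aᵢ)·bᵢ, where ⋆ is the (Arens extension of the) product of A ⊗̂ A^{op}, and consequently ‖R ⋆ δ - R‖ ≤ ‖R‖·sup_{‖a‖≤1}‖a·δ - δ·a - a ⊗ 1 + 1 ⊗ a‖ when the infimum over representations of R is taken. -/

import Mathlib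

open NormedSpace Metric

noncomputable section

universe u v w

instance {E : Type*} [SeminormedAddCommGroup E] [NormedSpace ℂ E] :
    SeminormedAddCommGroup (StrongDual ℂ E) := inferInstance

instance {E : Type*} [SeminormedAddCommGroup E] [NormedSpace ℂ E] :
    NormedSpace ℂ (StrongDual ℂ E) := inferInstance

/-- The Banach-space transpose (adjoint) of a continuous linear map. -/
def dualTranspose {X : Type u} {Y : Type v} [NormedAddCommGroup X] [NormedSpace ℂ X]
    [NormedAddCommGroup Y] [NormedSpace ℂ Y] (f : X →L[ℂ] Y) :
    StrongDual ℂ Y →L[ℂ] StrongDual ℂ X :=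
  (ContinuousLinearMap.compL ℂ X Y ℂ).flip f

/-- The bidual (double adjoint) map `f** : X** → Y**`. -/
def bidualMap {X : Type u} {Y : Type v} [NormedAddCommGroup X] [NormedSpace ℂ X]
    [NormedAddCommGroup Y] [NormedSpace ℂ Y] (f : X →L[ℂ] Y) :
    StrongDual ℂ (StrongDual ℂ X) →L[ℂ] StrongDual ℂ (StrongDual ℂ Y) :=
  dualTranspose (dualTranspose f)

/-- `(T, p)` is (an isometric copy of) the projective tensor product `A ⊗̂ A`:
`p` is a contractive bilinear map with dense span satisfying the universal
property of the projective tensor norm. -/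
structure IsProjTensorProduct (A : Type u) (T : Type v) [NormedAddCommGroup A]
    [NormedSpace ℂ A] [NormedAddCommGroup T] [NormedSpace ℂ T] [CompleteSpace T]
    (p : A →L[ℂ] A →L[ℂ] T) : Prop where
  norm_tmul_le : ∀ a b : A, ‖p a b‖ ≤ ‖a‖ * ‖b‖
  dense_span : Dense (↑(Submodule.span ℂ (Set.range fun ab : A × A => p ab.1 ab.2)) : Set T)
  lift : ∀ {W : Type w} [NormedAddCommGroup W] [NormedSpace ℂ W] [CompleteSpace W]
      (f : A →L[ℂ] A →L[ℂ] W), ∃ g : T →L[ℂ] W, (∀ a b : A, g (p a b) = f a b) ∧ ‖g‖ ≤ ‖f‖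

set_option synthInstance.maxHeartbeats 1000000
set_option maxHeartbeats 2000000

section Aux

variable {X : Type*} {Y : Type*} {Z : Type*} [NormedAddCommGroup X] [NormedSpace ℂ X]
  [NormedAddCommGroup Y] [NormedSpace ℂ Y] [NormedAddCommGroup Z] [NormedSpace ℂ Z]

lemma bidualMap_apply' (f : X →L[ℂ] Y) (F : StrongDual ℂ (StrongDual ℂ X)) (g : StrongDual ℂ Y) :
    bidualMap f F g = F (dualTranspose f g) := rfl

lemma bidualMap_incl (f : X →L[ℂ] Y) (x : X) :
    bidualMap f (inclusionInDoubleDual ℂ X x) = inclusionInDoubleDual ℂ Y (f x) := by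
  ext g; rfl

lemma bidualMap_comp_apply (f : X →L[ℂ] Y) (g : Y →L[ℂ] Z) (F : StrongDual ℂ (StrongDual ℂ X)) :
    bidualMap (g.comp f) F = bidualMap g (bidualMap f F) := by ext h; rfl

lemma dualTranspose_norm_le (f : X →L[ℂ] Y) : ‖dualTranspose f‖ ≤ ‖f‖ := by
  refine ContinuousLinearMap.opNorm_le_bound _ (norm_nonneg f) fun g => ?_
  show ‖g.comp f‖ ≤ ‖f‖ * ‖g‖
  rw [mul_comm]; exact ContinuousLinearMap.opNorm_comp_le g f

lemma bidualMap_norm_le (f : X →L[ℂ] Y) (F : StrongDual ℂ (StrongDual ℂ X)) :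
    ‖bidualMap f F‖ ≤ ‖f‖ * ‖F‖ := by
  calc ‖bidualMap f F‖ ≤ ‖dualTranspose (dualTranspose f)‖ * ‖F‖ :=
        (dualTranspose (dualTranspose f)).le_opNorm F
    _ ≤ ‖f‖ * ‖F‖ := by
        gcongr
        exact (dualTranspose_norm_le _).trans (dualTranspose_norm_le f)

lemma dualTranspose_smul (c : ℂ) (f : X →L[ℂ] Y) :
    dualTranspose (c • f) = c • dualTranspose f :=
  map_smul ((ContinuousLinearMap.compL ℂ X Y ℂ).flip) c f

lemma bidualMap_smul (c : ℂ) (f : X →L[ℂ] Y) :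
    bidualMap (c • f) = c • bidualMap f := by
  unfold bidualMap
  rw [dualTranspose_smul, dualTranspose_smul]

lemma dualTranspose_sum {ι : Type*} (s : Finset ι) (f : ι → X →L[ℂ] Y) :
    dualTranspose (∑ i ∈ s, f i) = ∑ i ∈ s, dualTranspose (f i) :=
  map_sum ((ContinuousLinearMap.compL ℂ X Y ℂ).flip) f s

lemma bidualMap_sum {ι : Type*} (s : Finset ι) (f : ι → X →L[ℂ] Y) :
    bidualMap (∑ i ∈ s, f i) = ∑ i ∈ s, bidualMap (f i) := by
  unfold bidualMap
  rw [dualTranspose_sum, dualTranspose_sum]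

lemma bidualMap_sum_apply {ι : Type*} (s : Finset ι) (f : ι → X →L[ℂ] Y)
    (F : StrongDual ℂ (StrongDual ℂ X)) :
    bidualMap (∑ i ∈ s, f i) F = ∑ i ∈ s, bidualMap (f i) F := by
  rw [bidualMap_sum]; exact ContinuousLinearMap.sum_apply _ _ _

lemma bidualMap_zero : bidualMap (0 : X →L[ℂ] Y) = 0 := by
  have h := bidualMap_smul (0 : ℂ) (0 : X →L[ℂ] Y)
  simp only [bidualMap, dualTranspose, map_zero]

end Aux

/-- Uniqueness of continuous extensions from the dense span of elementary tensors. -/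
lemma IsProjTensorProduct.ext_dense {A : Type*} {T : Type*} [NormedAddCommGroup A]
    [NormedSpace ℂ A] [NormedAddCommGroup T] [NormedSpace ℂ T] [CompleteSpace T]
    {p : A →L[ℂ] A →L[ℂ] T} (hp : IsProjTensorProduct A T p)
    {W : Type*} [NormedAddCommGroup W] [NormedSpace ℂ W]
    {f g : T →L[ℂ] W} (h : ∀ a b : A, f (p a b) = g (p a b)) : f = g := by
  apply ContinuousLinearMap.coeFn_injective
  refine Continuous.ext_on hp.dense_span f.continuous g.continuous ?_
  intro x hx
  exact LinearMap.eqOn_span (f := f) (g := g)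
    (by rintro _ ⟨ab, rfl⟩; exact h ab.1 ab.2) hx

/-- The right module action is contractive: `‖R x‖ ≤ ‖x‖`. -/
lemma rightmod_norm_le {A : Type u} {T : Type v} [NormedRing A] [NormedAlgebra ℂ A]
    [NormedAddCommGroup T] [NormedSpace ℂ T] [CompleteSpace T]
    {p : A →L[ℂ] A →L[ℂ] T} (hp : IsProjTensorProduct.{u, v, w} A T p)
    (R : A →L[ℂ] T →L[ℂ] T) (hR : ∀ a b c : A, R a (p b c) = p b (c * a)) (x : A) :
    ‖R x‖ ≤ ‖x‖ := by
  refine ContinuousLinearMap.opNorm_le_bound _ (norm_nonneg x) fun t => ?_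
  refine NormedSpace.norm_le_dual_bound ℂ _ (by positivity) fun φ => ?_
  set e : ULift.{w} ℂ ≃L[ℂ] ℂ := ContinuousLinearEquiv.ulift with he
  set G : T →L[ℂ] ULift.{w} ℂ := (e.symm : ℂ →L[ℂ] ULift.{w} ℂ).comp φ with hG
  set F : A →L[ℂ] A →L[ℂ] ULift.{w} ℂ :=
    ((ContinuousLinearMap.compL ℂ A A (ULift.{w} ℂ)).flip
      ((ContinuousLinearMap.mul ℂ A).flip x)).comp
      ((ContinuousLinearMap.compL ℂ A T (ULift.{w} ℂ) G).comp p) with hF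
  have hFab : ∀ c d : A, F c d = G (p c (d * x)) := fun c d => rfl
  obtain ⟨g, hg, hgn⟩ := hp.lift F
  have hge : g = G.comp (R x) := hp.ext_dense fun c d => by
    rw [hg, hFab]; exact (congrArg G (hR x c d)).symm
  have hGnorm : ∀ z : T, ‖G z‖ = ‖φ z‖ := fun z => rfl
  have hFnorm : ‖F‖ ≤ ‖φ‖ * ‖x‖ := by
    refine ContinuousLinearMap.opNorm_le_bound _ (by positivity) fun cc => ?_
    refine ContinuousLinearMap.opNorm_le_bound _ (by positivity) fun dd => ?_
    rw [hFab]
    calc ‖G (p cc (dd * x))‖ = ‖φ (p cc (dd * x))‖ := hGnorm _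
      _ ≤ ‖φ‖ * ‖p cc (dd * x)‖ := φ.le_opNorm _
      _ ≤ ‖φ‖ * (‖cc‖ * ‖dd * x‖) := by gcongr; exact hp.norm_tmul_le _ _
      _ ≤ ‖φ‖ * (‖cc‖ * (‖dd‖ * ‖x‖)) := by gcongr ?_ * (_ * ?_) <;>
            first | rfl | exact norm_mul_le _ _
      _ = ‖φ‖ * ‖x‖ * ‖cc‖ * ‖dd‖ := by ring
  calc ‖φ (R x t)‖ = ‖G (R x t)‖ := (hGnorm _).symm
    _ = ‖g t‖ := by rw [hge]; rfl
    _ ≤ ‖g‖ * ‖t‖ := g.le_opNorm t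
    _ ≤ (‖φ‖ * ‖x‖) * ‖t‖ := by gcongr; exact hgn.trans hFnorm
    _ = ‖x‖ * ‖t‖ * ‖φ‖ := by ring
theorem stmt17 {A : Type u} [NormedRing A] [NormedAlgebra ℂ A] [NormOneClass A]
    [CompleteSpace A] {T : Type v} [NormedAddCommGroup T] [NormedSpace ℂ T] [CompleteSpace T]
    (p : A →L[ℂ] A →L[ℂ] T) (hp : IsProjTensorProduct A T p)
    (πh : T →L[ℂ] A) (hπh : ∀ a b : A, πh (p a b) = a * b)
    -- the multiplication of `A ⊗̂ Aᵒᵖ` : `(a ⊗ b) ⋆ (c ⊗ d) = ac ⊗ db`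
    (m : T →L[ℂ] T →L[ℂ] T)
    (hm : ∀ a b c d : A, m (p a b) (p c d) = p (a * c) (d * b))
    -- `star` is the (first) Arens extension of `m` to the bidual
    (star : StrongDual ℂ (StrongDual ℂ T) →L[ℂ] StrongDual ℂ (StrongDual ℂ T) →L[ℂ] StrongDual ℂ (StrongDual ℂ T))
    (hstar : ∀ (F G : StrongDual ℂ (StrongDual ℂ T)) (f g : StrongDual ℂ T),
      (∀ s : T, g s = G (dualTranspose (m s) f)) → star F G f = F g)
    -- the canonical bimodule actions of `A` on `A ⊗̂ A`
    (L R : A →L[ℂ] T →L[ℂ] T)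
    (hL : ∀ a b c : A, L a (p b c) = p (a * b) c)
    (hR : ∀ a b c : A, R a (p b c) = p b (c * a))
    (δ : StrongDual ℂ (StrongDual ℂ T)) (hδ : bidualMap πh δ = 0)
    {ι : Type w} (s : Finset ι) (a b : ι → A)
    (hker : (∑ i ∈ s, a i * b i) = 0) :
    star (inclusionInDoubleDual ℂ T (∑ i ∈ s, p (a i) (b i))) δ -
        inclusionInDoubleDual ℂ T (∑ i ∈ s, p (a i) (b i)) =
      ∑ i ∈ s, bidualMap (R (b i))
        (bidualMap (L (a i)) δ - bidualMap (R (a i)) δ -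
          inclusionInDoubleDual ℂ T (p (a i) 1) + inclusionInDoubleDual ℂ T (p 1 (a i))) ∧
    ∀ c : ℝ, (∀ x : A, ‖x‖ ≤ 1 →
        ‖bidualMap (L x) δ - bidualMap (R x) δ -
          inclusionInDoubleDual ℂ T (p x 1) + inclusionInDoubleDual ℂ T (p 1 x)‖ ≤ c) →
      ‖star (inclusionInDoubleDual ℂ T (∑ i ∈ s, p (a i) (b i))) δ -
          inclusionInDoubleDual ℂ T (∑ i ∈ s, p (a i) (b i))‖ ≤
        (∑ i ∈ s, ‖a i‖ * ‖b i‖) * c := by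
  have stepA : ∀ x : T, star (inclusionInDoubleDual ℂ T x) δ = bidualMap (m x) δ := by
    intro x
    ext f
    exact hstar (inclusionInDoubleDual ℂ T x) δ f
      (δ.comp (((ContinuousLinearMap.compL ℂ T T ℂ) f).comp m)) (fun t => rfl)
  have hm_eq : ∀ x y : A, m (p x y) = (R y).comp (L x) := fun x y =>
    hp.ext_dense fun cc d => by
      rw [hm, ContinuousLinearMap.comp_apply, hL, hR]
  have hRR : ∀ x y : A, (R y).comp (R x) = R (x * y) := fun x y =>
    hp.ext_dense fun cc d => by
      rw [ContinuousLinearMap.comp_apply, hR, hR, hR, mul_assoc]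
  have term_eq : ∀ i ∈ s,
      bidualMap (R (b i)) (bidualMap (L (a i)) δ - bidualMap (R (a i)) δ -
          inclusionInDoubleDual ℂ T (p (a i) 1) + inclusionInDoubleDual ℂ T (p 1 (a i))) =
      bidualMap (m (p (a i) (b i))) δ - bidualMap (R (a i * b i)) δ -
        inclusionInDoubleDual ℂ T (p (a i) (b i)) +
        inclusionInDoubleDual ℂ T (p 1 (a i * b i)) := by
    intro i _
    rw [map_add, map_sub, map_sub, bidualMap_incl, bidualMap_incl, hR, hR, one_mul,
      ← bidualMap_comp_apply, ← bidualMap_comp_apply, ← hm_eq, hRR]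
  have key : star (inclusionInDoubleDual ℂ T (∑ i ∈ s, p (a i) (b i))) δ -
        inclusionInDoubleDual ℂ T (∑ i ∈ s, p (a i) (b i)) =
      ∑ i ∈ s, bidualMap (R (b i))
        (bidualMap (L (a i)) δ - bidualMap (R (a i)) δ -
          inclusionInDoubleDual ℂ T (p (a i) 1) + inclusionInDoubleDual ℂ T (p 1 (a i))) := by
    rw [Finset.sum_congr rfl term_eq, stepA]
    have h1 : bidualMap (m (∑ i ∈ s, p (a i) (b i))) δ
        = ∑ i ∈ s, bidualMap (m (p (a i) (b i))) δ := by
      rw [map_sum m (fun i => p (a i) (b i)) s, bidualMap_sum_apply]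
    have h2 : (∑ i ∈ s, bidualMap (R (a i * b i)) δ) = 0 := by
      rw [← bidualMap_sum_apply, ← map_sum R (fun i => a i * b i) s, hker, map_zero,
        bidualMap_zero, ContinuousLinearMap.zero_apply]
    have h3 : (∑ i ∈ s, inclusionInDoubleDual ℂ T (p 1 (a i * b i))) = 0 := by
      rw [← map_sum (inclusionInDoubleDual ℂ T) (fun i => p 1 (a i * b i)) s,
        ← map_sum (p 1) (fun i => a i * b i) s, hker, map_zero, map_zero]
    have h4 : inclusionInDoubleDual ℂ T (∑ i ∈ s, p (a i) (b i))
        = ∑ i ∈ s, inclusionInDoubleDual ℂ T (p (a i) (b i)) :=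
      map_sum (inclusionInDoubleDual ℂ T) (fun i => p (a i) (b i)) s
    rw [h1, h4, Finset.sum_add_distrib, Finset.sum_sub_distrib, Finset.sum_sub_distrib, h2, h3]
    abel
  refine ⟨key, fun c hc => ?_⟩
  rw [key]
  have hD0 : bidualMap (L 0) δ - bidualMap (R 0) δ - inclusionInDoubleDual ℂ T (p 0 1)
      + inclusionInDoubleDual ℂ T (p 1 0) = 0 := by
    rw [map_zero L, map_zero R, bidualMap_zero, map_zero (p 1), map_zero p]
    simp
  have hc0 : 0 ≤ c := by
    have h0 := hc 0 (by simp)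
    rw [hD0, norm_zero] at h0; exact h0
  have hhom : ∀ (r : ℂ) (x : A),
      bidualMap (L (r • x)) δ - bidualMap (R (r • x)) δ -
          inclusionInDoubleDual ℂ T (p (r • x) 1) + inclusionInDoubleDual ℂ T (p 1 (r • x))
        = r • (bidualMap (L x) δ - bidualMap (R x) δ -
          inclusionInDoubleDual ℂ T (p x 1) + inclusionInDoubleDual ℂ T (p 1 x)) := by
    intro r x
    rw [map_smul L, map_smul R, bidualMap_smul, bidualMap_smul, map_smul p,
      map_smul (p 1)]
    simp only [ContinuousLinearMap.smul_apply, map_smul, smul_sub, smul_add]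
  have hDle : ∀ x : A, ‖bidualMap (L x) δ - bidualMap (R x) δ -
      inclusionInDoubleDual ℂ T (p x 1) + inclusionInDoubleDual ℂ T (p 1 x)‖ ≤ ‖x‖ * c := by
    intro x
    rcases eq_or_ne x 0 with rfl | hx
    · rw [hD0, norm_zero, norm_zero, zero_mul]
    · have hxp : (0:ℝ) < ‖x‖ := norm_pos_iff.mpr hx
      have hxc : (‖x‖ : ℂ) ≠ 0 := Complex.ofReal_ne_zero.mpr (ne_of_gt hxp)
      set y : A := (‖x‖ : ℂ)⁻¹ • x with hy
      have hyn : ‖y‖ ≤ 1 := by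
        rw [hy, norm_smul, norm_inv, Complex.norm_real, Real.norm_of_nonneg hxp.le,
          inv_mul_cancel₀ (ne_of_gt hxp)]
      have hxy : x = (‖x‖ : ℂ) • y := by
        rw [hy, smul_smul, mul_inv_cancel₀ hxc, one_smul]
      calc ‖bidualMap (L x) δ - bidualMap (R x) δ -
            inclusionInDoubleDual ℂ T (p x 1) + inclusionInDoubleDual ℂ T (p 1 x)‖
          = ‖(‖x‖ : ℂ) • (bidualMap (L y) δ - bidualMap (R y) δ -
            inclusionInDoubleDual ℂ T (p y 1) + inclusionInDoubleDual ℂ T (p 1 y))‖ := by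
            conv_lhs => rw [hxy]
            rw [hhom]
        _ = ‖x‖ * ‖bidualMap (L y) δ - bidualMap (R y) δ -
            inclusionInDoubleDual ℂ T (p y 1) + inclusionInDoubleDual ℂ T (p 1 y)‖ := by
            rw [norm_smul, Complex.norm_real, Real.norm_of_nonneg hxp.le]
        _ ≤ ‖x‖ * c := by gcongr; exact hc y hyn
  calc ‖∑ i ∈ s, bidualMap (R (b i))
        (bidualMap (L (a i)) δ - bidualMap (R (a i)) δ -
          inclusionInDoubleDual ℂ T (p (a i) 1) + inclusionInDoubleDual ℂ T (p 1 (a i)))‖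
      ≤ ∑ i ∈ s, ‖bidualMap (R (b i))
        (bidualMap (L (a i)) δ - bidualMap (R (a i)) δ -
          inclusionInDoubleDual ℂ T (p (a i) 1) + inclusionInDoubleDual ℂ T (p 1 (a i)))‖ :=
        norm_sum_le _ _
    _ ≤ ∑ i ∈ s, ‖a i‖ * ‖b i‖ * c := by
        refine Finset.sum_le_sum fun i _ => ?_
        calc ‖bidualMap (R (b i))
              (bidualMap (L (a i)) δ - bidualMap (R (a i)) δ -
                inclusionInDoubleDual ℂ T (p (a i) 1) +
                inclusionInDoubleDual ℂ T (p 1 (a i)))‖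
            ≤ ‖R (b i)‖ * ‖bidualMap (L (a i)) δ - bidualMap (R (a i)) δ -
                inclusionInDoubleDual ℂ T (p (a i) 1) +
                inclusionInDoubleDual ℂ T (p 1 (a i))‖ := bidualMap_norm_le _ _
          _ ≤ ‖b i‖ * (‖a i‖ * c) :=
              mul_le_mul (rightmod_norm_le hp R hR _) (hDle _) (norm_nonneg _) (norm_nonneg _)
          _ = ‖a i‖ * ‖b i‖ * c := by ring
    _ = (∑ i ∈ s, ‖a i‖ * ‖b i‖) * c := by rw [Finset.sum_mul]
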